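/- For fixed x > 1 and μ ≥ 0, the function u ↦ I_μ(xu) K_μ(u) - I_μ(u) K_μ(xu) is nonnegative for all u > 0. -/

import Mathlib

open MeasureTheory Set Real

/-- The modified Bessel function of the first kind, via its power series. -/
noncomputable def besselI (ν z : ℝ) : ℝ :=
  ∑' k : ℕ, (z/2) ^ ν * (z/2) ^ (2*k) / ((k.factorial : ℝ) * Real.Gamma (k + ν + 1))

/-- The modified Bessel function of the second kind, via its integral representation
`K_ν(z) = ∫₀^∞ e^{-z cosh t} cosh(ν t) dt` (valid for `z > 0`). -/
noncomputable def besselK (ν z : ℝ) : ℝ :=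
  ∫ t in Ioi (0:ℝ), Real.exp (-z * Real.cosh t) * Real.cosh (ν * t)

lemma gamma_arg_pos (ν : ℝ) (hν : 0 ≤ ν) (k : ℕ) : (0:ℝ) < (k:ℝ) + ν + 1 := by positivity

lemma fact_mul_gamma_le (ν : ℝ) (hν : 0 ≤ ν) (k : ℕ) :
    (k.factorial : ℝ) * Real.Gamma (ν + 1) ≤ Real.Gamma ((k:ℝ) + ν + 1) := by
  induction k with
  | zero => simp
  | succ n ih =>
    have h1 : (0:ℝ) < (n:ℝ) + ν + 1 := gamma_arg_pos ν hν n
    have hcast : ((n+1:ℕ):ℝ) + ν + 1 = ((n:ℝ) + ν + 1) + 1 := by push_cast; ring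
    rw [hcast, Real.Gamma_add_one h1.ne']
    have hfact : ((n+1:ℕ).factorial : ℝ) = ((n:ℝ) + 1) * (n.factorial : ℝ) := by
      push_cast [Nat.factorial_succ]; ring
    rw [hfact, mul_assoc]
    have hG : (0:ℝ) < Real.Gamma ((n:ℝ) + ν + 1) := Real.Gamma_pos_of_pos h1
    have hfg : (0:ℝ) ≤ (n.factorial : ℝ) * Real.Gamma (ν + 1) := by
      have := Real.Gamma_pos_of_pos (show (0:ℝ) < ν + 1 by positivity)
      positivity
    exact mul_le_mul (by linarith) ih hfg (by linarith)

lemma gamma_lower (ν : ℝ) (hν : 0 ≤ ν) (k : ℕ) :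
    Real.Gamma (ν + 1) ≤ Real.Gamma ((k:ℝ) + ν + 1) := by
  refine le_trans ?_ (fact_mul_gamma_le ν hν k)
  have h1 : (1:ℝ) ≤ (k.factorial : ℝ) := by exact_mod_cast Nat.one_le_iff_ne_zero.mpr k.factorial_pos.ne'
  have hG : (0:ℝ) < Real.Gamma (ν + 1) := Real.Gamma_pos_of_pos (by positivity)
  nlinarith

lemma besselI_term_nonneg (ν z : ℝ) (hν : 0 ≤ ν) (hz : 0 < z) (k : ℕ) :
    0 ≤ (z/2) ^ ν * (z/2) ^ (2*k) / ((k.factorial : ℝ) * Real.Gamma ((k:ℝ) + ν + 1)) := by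
  have hG := Real.Gamma_pos_of_pos (gamma_arg_pos ν hν k)
  have hz2 : (0:ℝ) < z/2 := by linarith
  have h1 : (0:ℝ) < (k.factorial : ℝ) := by exact_mod_cast k.factorial_pos
  positivity

lemma besselI_summable (ν z : ℝ) (hν : 0 ≤ ν) (hz : 0 < z) :
    Summable fun k : ℕ =>
      (z/2) ^ ν * (z/2) ^ (2*k) / ((k.factorial : ℝ) * Real.Gamma ((k:ℝ) + ν + 1)) := by
  have hz2 : (0:ℝ) < z/2 := by linarith
  have hGν : (0:ℝ) < Real.Gamma (ν + 1) := Real.Gamma_pos_of_pos (by positivity)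
  refine Summable.of_nonneg_of_le (besselI_term_nonneg ν z hν hz) (fun k => ?_)
    (((Real.summable_pow_div_factorial ((z/2)^2)).mul_left ((z/2)^ν / Real.Gamma (ν+1))))
  have hG := Real.Gamma_pos_of_pos (gamma_arg_pos ν hν k)
  have hfk : (0:ℝ) < (k.factorial : ℝ) := by exact_mod_cast k.factorial_pos
  have hnum : (0:ℝ) ≤ (z/2)^ν * (z/2)^(2*k) := by positivity
  have hden : (k.factorial : ℝ) * Real.Gamma (ν + 1) ≤
      (k.factorial : ℝ) * Real.Gamma ((k:ℝ) + ν + 1) := by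
    exact mul_le_mul_of_nonneg_left (gamma_lower ν hν k) hfk.le
  calc (z/2)^ν * (z/2)^(2*k) / ((k.factorial : ℝ) * Real.Gamma ((k:ℝ) + ν + 1))
      ≤ (z/2)^ν * (z/2)^(2*k) / ((k.factorial : ℝ) * Real.Gamma (ν + 1)) := by
        apply div_le_div_of_nonneg_left hnum (by positivity) hden
    _ = (z/2)^ν / Real.Gamma (ν+1) * (((z/2)^2)^k / k.factorial) := by
        rw [pow_mul]; field_simp

lemma besselI_nonneg (ν z : ℝ) (hν : 0 ≤ ν) (hz : 0 < z) : 0 ≤ besselI ν z :=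
  tsum_nonneg (besselI_term_nonneg ν z hν hz)

lemma besselI_mono (ν : ℝ) (hν : 0 ≤ ν) {z₁ z₂ : ℝ} (h1 : 0 < z₁) (h12 : z₁ ≤ z₂) :
    besselI ν z₁ ≤ besselI ν z₂ := by
  have h2 : 0 < z₂ := lt_of_lt_of_le h1 h12
  refine Summable.tsum_le_tsum (fun k => ?_) (besselI_summable ν z₁ hν h1) (besselI_summable ν z₂ hν h2)
  have hG := Real.Gamma_pos_of_pos (gamma_arg_pos ν hν k)
  have hfk : (0:ℝ) < (k.factorial : ℝ) := by exact_mod_cast k.factorial_pos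
  apply div_le_div_of_nonneg_right ?_ (by positivity)
  have ha : (0:ℝ) ≤ z₁/2 := by linarith
  have hb : z₁/2 ≤ z₂/2 := by linarith
  exact mul_le_mul (Real.rpow_le_rpow ha hb hν) (pow_le_pow_left₀ ha hb _)
    (by positivity) (Real.rpow_nonneg (by linarith) _)

lemma besselK_integrable (ν z : ℝ) (hν : 0 ≤ ν) (hz : 0 < z) :
    IntegrableOn (fun t => Real.exp (-z * Real.cosh t) * Real.cosh (ν * t)) (Ioi (0:ℝ)) := by
  apply integrable_of_isBigO_exp_neg (b := 1) one_pos
    (((Real.continuous_exp.comp ((continuous_const.mul Real.continuous_cosh))).mul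
      (Real.continuous_cosh.comp (continuous_const.mul continuous_id))).continuousOn)
  rw [Asymptotics.isBigO_iff]
  refine ⟨1, ?_⟩
  filter_upwards [Filter.eventually_gt_atTop (0:ℝ),
    (Real.tendsto_exp_div_pow_atTop 1).eventually_ge_atTop (2*(ν+1)/z)] with t ht h2
  have hcosh : Real.exp t / 2 ≤ Real.cosh t := by
    rw [Real.cosh_eq]; have := Real.exp_pos (-t); linarith
  have hcν : Real.cosh (ν*t) ≤ Real.exp (ν*t) := by
    rw [Real.cosh_eq]
    have h1 : Real.exp (-(ν*t)) ≤ Real.exp (ν*t) :=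
      Real.exp_le_exp.mpr (by nlinarith)
    linarith
  have hexp : (ν+1)*t ≤ z/2 * Real.exp t := by
    rw [pow_one, le_div_iff₀ ht] at h2
    calc (ν+1)*t ≤ z/2 * (2*(ν+1)/z * t) := le_of_eq (by field_simp)
      _ ≤ z/2 * Real.exp t := by nlinarith
  have hbound : Real.exp (-z * Real.cosh t) * Real.cosh (ν * t) ≤ Real.exp (-t) := by
    calc Real.exp (-z * Real.cosh t) * Real.cosh (ν * t)
        ≤ Real.exp (-z * (Real.exp t / 2)) * Real.exp (ν*t) := by
          apply mul_le_mul (Real.exp_le_exp.mpr (by nlinarith)) hcν (Real.cosh_pos _).le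
            (Real.exp_pos _).le
      _ = Real.exp (ν*t - z/2 * Real.exp t) := by rw [← Real.exp_add]; ring_nf
      _ ≤ Real.exp (-t) := Real.exp_le_exp.mpr (by linarith)
  have hnn : 0 ≤ Real.exp (-z * Real.cosh t) * Real.cosh (ν * t) :=
    mul_nonneg (Real.exp_pos _).le (Real.cosh_pos _).le
  simp only [Pi.mul_apply, Function.comp_apply, id_eq, Real.norm_eq_abs, abs_of_nonneg hnn,
    abs_of_nonneg (Real.exp_pos _).le, one_mul, neg_one_mul]
  exact hbound

lemma besselK_nonneg (ν z : ℝ) : 0 ≤ besselK ν z := by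
  refine setIntegral_nonneg measurableSet_Ioi (fun t _ => ?_)
  exact mul_nonneg (Real.exp_pos _).le (Real.cosh_pos _).le

lemma besselK_anti (ν : ℝ) (hν : 0 ≤ ν) {z₁ z₂ : ℝ} (h1 : 0 < z₁) (h12 : z₁ ≤ z₂) :
    besselK ν z₂ ≤ besselK ν z₁ := by
  have h2 : 0 < z₂ := lt_of_lt_of_le h1 h12
  refine setIntegral_mono_on (besselK_integrable ν z₂ hν h2)
    (besselK_integrable ν z₁ hν h1) measurableSet_Ioi (fun t _ => ?_)
  apply mul_le_mul_of_nonneg_right ?_ (Real.cosh_pos _).le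
  apply Real.exp_le_exp.mpr
  have := Real.cosh_pos t
  nlinarith

theorem stmt_8 (μ x : ℝ) (hμ : 0 ≤ μ) (hx : 1 < x) :
    ∀ u > (0:ℝ), 0 ≤ besselI μ (x*u) * besselK μ u - besselI μ u * besselK μ (x*u) := by
  intro u hu
  have hxu : 0 < x * u := by nlinarith
  have huxu : u ≤ x * u := by nlinarith
  have hI1 : 0 ≤ besselI μ u := besselI_nonneg μ u hμ hu
  have hI2 : besselI μ u ≤ besselI μ (x*u) := besselI_mono μ hμ hu huxu
  have hK1 : 0 ≤ besselK μ (x*u) := besselK_nonneg μ (x*u)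
  have hK2 : besselK μ (x*u) ≤ besselK μ u := besselK_anti μ hμ hu huxu
  have := mul_le_mul hI2 hK2 hK1 (hI1.trans hI2)
  linarith
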